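/- arXiv:2604.16467 — 4 statements merged into one kernel-verified Lean document; each statement's English description precedes it below -/
import Mathlib

section
/- Let n ≥ 1, let f ∈ (0,1) be a lending fee, and let R ∈ ℝ^n be a reserve vector with R ≥ 0 componentwise and R ≠ 0. Then there exists no differentiable function F : ℝ^n → ℝ such that for every price vector p in the open positive orthant ℝ^n_{++}, (i) the gradient satisfies (∇F(p))_i ≥ 8 f R_i / (p · R) for every index i, and (ii) F(p) ≤ 1. That is, the conditions '∇_p F ≥ 8fR/(p·R) componentwise' and 'F ≤ 1' are self-contradictory. -/
/-- For `n ≥ 1`, a lending fee `f ∈ (0,1)`, and reserves `R ≥ 0`, `R ≠ 0`,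
there is no differentiable `F : ℝⁿ → ℝ` such that on the open positive orthant the gradient
of `F` is componentwise at least `8fR/(p·R)` and `F ≤ 1`. -/
theorem no_discount_function (n : ℕ) (hn : 1 ≤ n) (f : ℝ) (hf : f ∈ Set.Ioo (0 : ℝ) 1)
    (R : EuclideanSpace ℝ (Fin n)) (hR : ∀ i, 0 ≤ R i) (hR0 : R ≠ 0) :
    ¬ ∃ F : EuclideanSpace ℝ (Fin n) → ℝ, Differentiable ℝ F ∧
      ∀ p : EuclideanSpace ℝ (Fin n), (∀ i, 0 < p i) →
        (∀ i, 8 * f * R i / (∑ j, p j * R j) ≤ gradient F p i) ∧ F p ≤ 1 := by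
  rintro ⟨F, hF, hcond⟩
  obtain ⟨hf0, hf1⟩ := hf
  -- sum of reserves is positive
  obtain ⟨i0, hi0⟩ : ∃ i, R i ≠ 0 := by
    by_contra h
    push_neg at h
    exact hR0 (PiLp.ext h)
  have hS : 0 < ∑ j, R j :=
    Finset.sum_pos' (fun i _ => hR i) ⟨i0, Finset.mem_univ i0, lt_of_le_of_ne (hR i0) (Ne.symm hi0)⟩
  -- vector of ones
  set v : EuclideanSpace ℝ (Fin n) := WithLp.toLp 2 (fun _ => (1 : ℝ)) with hv
  have hvi : ∀ i, v i = 1 := fun i => rfl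
  have htv : ∀ (t : ℝ) (i : Fin n), (t • v) i = t := by
    intro t i; simp [hv]
  set g : ℝ → ℝ := fun t => F (t • v) with hg
  -- derivative of g
  have hder : ∀ t : ℝ, HasDerivAt g (∑ i, gradient F (t • v) i) t := by
    intro t
    have h1 : HasDerivAt (fun s : ℝ => s • v) v t := by simpa using (hasDerivAt_id t).smul_const v
    have h2 := ((hF (t • v)).hasFDerivAt).comp_hasDerivAt t h1
    refine h2.congr_deriv (Eq.symm ?_)
    have := (hF (t • v)).hasGradientAt.hasFDerivAt
    rw [this.fderiv]
    simp only [InnerProductSpace.toDual_apply_apply]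
    rw [PiLp.inner_apply]
    simp only [RCLike.inner_apply, starRingEnd_apply, star_trivial]
    exact Finset.sum_congr rfl fun x _ => by rw [hvi x, one_mul]
  have hderge : ∀ t : ℝ, 0 < t → 8 * f / t ≤ ∑ i, gradient F (t • v) i := by
    intro t ht
    have hpos : ∀ i, 0 < (t • v) i := fun i => by rw [htv]; exact ht
    have hsum : (∑ j, (t • v) j * R j) = t * ∑ j, R j := by
      rw [Finset.mul_sum]; congr 1; ext j; rw [htv]
    have hb := (hcond (t • v) hpos).1
    calc 8 * f / t = ∑ i, 8 * f * R i / (t * ∑ j, R j) := by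
          rw [← Finset.sum_div]
          rw [← Finset.mul_sum]
          field_simp
      _ ≤ ∑ i, gradient F (t • v) i := by
          apply Finset.sum_le_sum
          intro i _
          rw [← hsum]
          exact hb i
  -- define h
  set h : ℝ → ℝ := fun t => g t - 8 * f * Real.log t with hh
  have hmono : MonotoneOn h (Set.Ici 1) := by
    apply monotoneOn_of_deriv_nonneg (convex_Ici 1)
    · apply ContinuousOn.sub
      · exact fun t _ => ((hder t).continuousAt).continuousWithinAt
      · apply ContinuousOn.mul continuousOn_const
        exact Real.continuousOn_log.mono (fun t ht => by
          simp only [Set.mem_compl_iff, Set.mem_singleton_iff]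
          intro h0; rw [h0] at ht; simp at ht; linarith)
    · intro t ht
      rw [interior_Ici] at ht
      have ht1 : (1:ℝ) < t := ht
      apply DifferentiableAt.differentiableWithinAt
      exact ((hder t).differentiableAt).sub
        ((differentiableAt_const _).mul (Real.differentiableAt_log (by linarith)))
    · intro t ht
      rw [interior_Ici] at ht
      have ht1 : (1:ℝ) < t := ht
      have ht0 : (0:ℝ) < t := by linarith
      have hd : HasDerivAt h (∑ i, gradient F (t • v) i - 8 * f * t⁻¹) t :=
        (hder t).sub (((Real.hasDerivAt_log (ne_of_gt ht0)).const_mul (8 * f)))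
      rw [hd.deriv]
      have := hderge t ht0
      rw [div_eq_mul_inv] at this
      linarith
  -- conclude
  have hgle : ∀ t : ℝ, 0 < t → g t ≤ 1 := fun t ht =>
    (hcond (t • v) (fun i => by rw [htv]; exact ht)).2
  set T : ℝ := Real.exp ((2 - g 1) / (8 * f)) with hT
  have hexp : (0:ℝ) < (2 - g 1) / (8 * f) := by
    have := hgle 1 one_pos
    apply div_pos <;> linarith
  have hT1 : 1 < T := by
    rw [hT]; calc (1:ℝ) = Real.exp 0 := (Real.exp_zero).symm
      _ < _ := Real.exp_lt_exp.2 hexp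
  have := hmono (Set.self_mem_Ici) (Set.mem_Ici.2 hT1.le) hT1.le
  simp only [hh, Real.log_one, mul_zero, sub_zero, hT, Real.log_exp] at this
  have h8f : (0:ℝ) < 8 * f := by linarith
  have : g 1 ≤ g T - (2 - g 1) := by
    have := this
    rw [mul_div_cancel₀ _ (ne_of_gt h8f)] at this
    linarith
  have := hgle T (by linarith)
  linarith
end

section
/- Let n ≥ 1, let f > 0, let R ∈ ℝ^n with R ≥ 0 componentwise and R ≠ 0, and let F : ℝ^n → ℝ be differentiable on the open positive orthant ℝ^n_{++}. Suppose that for every p ∈ ℝ^n_{++} the gradient satisfies (∇F(p))_i ≥ 8 f R_i / (p · R) for every index i. Then for all p₁, p₂ ∈ ℝ^n_{++} with p₁ ≤ p₂ componentwise, one has F(p₂) − F(p₁) ≥ 8 f · ln((p₂ · R)/(p₁ · R)). -/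
/-- If `F` is differentiable on the open positive orthant and its gradient is
componentwise at least `8fR/(p·R)` there, then for `p₁ ≤ p₂` in the orthant,
`F p₂ - F p₁ ≥ 8f · ln((p₂·R)/(p₁·R))`. -/
theorem gradient_lower_bound_implies_log_growth (n : ℕ) (hn : 1 ≤ n) (f : ℝ) (hf : 0 < f)
    (R : EuclideanSpace ℝ (Fin n)) (hR : ∀ i, 0 ≤ R i) (hR0 : R ≠ 0)
    (F : EuclideanSpace ℝ (Fin n) → ℝ)
    (hFdiff : DifferentiableOn ℝ F {p : EuclideanSpace ℝ (Fin n) | ∀ i, 0 < p i})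
    (hgrad : ∀ p : EuclideanSpace ℝ (Fin n), (∀ i, 0 < p i) →
      ∀ i, 8 * f * R i / (∑ j, p j * R j) ≤ gradient F p i)
    (p₁ p₂ : EuclideanSpace ℝ (Fin n)) (hp₁ : ∀ i, 0 < p₁ i) (hp₂ : ∀ i, 0 < p₂ i)
    (hle : ∀ i, p₁ i ≤ p₂ i) :
    8 * f * Real.log ((∑ j, p₂ j * R j) / (∑ j, p₁ j * R j)) ≤ F p₂ - F p₁ := by
  set Ω : Set (EuclideanSpace ℝ (Fin n)) := {p | ∀ i, 0 < p i} with hΩ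
  have hopen : IsOpen Ω := by
    have : Ω = ⋂ i, (fun p : EuclideanSpace ℝ (Fin n) => p i) ⁻¹' Set.Ioi 0 := by
      ext p; simp [hΩ]
    rw [this]
    exact isOpen_iInter_of_finite fun i =>
      (isOpen_Ioi.preimage (EuclideanSpace.proj i).continuous)
  set v : EuclideanSpace ℝ (Fin n) := p₂ - p₁ with hv
  have hv0 : ∀ i, 0 ≤ v i := fun i => by simp [hv, sub_nonneg, hle i]
  set a : ℝ := ∑ j, p₁ j * R j with ha
  set b : ℝ := ∑ j, v j * R j with hb
  have ha0 : 0 < a := by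
    -- some coordinate of R is positive
    obtain ⟨i, hi⟩ : ∃ i, 0 < R i := by
      by_contra h
      push_neg at h
      exact hR0 (PiLp.ext fun i => le_antisymm (h i) (hR i))
    have : 0 < p₁ i * R i := mul_pos (hp₁ i) hi
    refine lt_of_lt_of_le this ?_
    exact Finset.single_le_sum (fun j _ => mul_nonneg (hp₁ j).le (hR j)) (Finset.mem_univ i)
  have hb0 : 0 ≤ b := Finset.sum_nonneg fun j _ => mul_nonneg (hv0 j) (hR j)
  -- the line
  set γ : ℝ → EuclideanSpace ℝ (Fin n) := fun t => p₁ + t • v with hγ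
  have hγmem : ∀ t ∈ Set.Icc (0:ℝ) 1, γ t ∈ Ω := by
    intro t ht i
    have : γ t i = p₁ i + t * v i := by simp [hγ]
    rw [this]
    have : 0 ≤ t * v i := mul_nonneg ht.1 (hv0 i)
    linarith [hp₁ i]
  have hsum : ∀ t, (∑ j, γ t j * R j) = a + t * b := by
    intro t
    have : ∀ j : Fin n, γ t j * R j = p₁ j * R j + t * (v j * R j) := by
      intro j; simp [hγ]; ring
    simp only [this, Finset.sum_add_distrib, ← Finset.mul_sum, ha, hb]
  have hs0 : ∀ t ∈ Set.Icc (0:ℝ) 1, 0 < a + t * b := by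
    intro t ht
    have : 0 ≤ t * b := mul_nonneg ht.1 hb0
    linarith
  set φ : ℝ → ℝ := fun t => F (γ t) - 8 * f * Real.log (a + t * b) with hφ
  -- derivative of φ at points of Icc
  have hderiv : ∀ t ∈ Set.Icc (0:ℝ) 1,
      HasDerivAt φ (inner ℝ (gradient F (γ t)) v - 8 * f * (b / (a + t * b))) t := by
    intro t ht
    have hmem := hγmem t ht
    have hFd : DifferentiableAt ℝ F (γ t) :=
      hFdiff.differentiableAt (hopen.mem_nhds hmem)
    have hγd : HasDerivAt γ v t := by
      have : HasDerivAt (fun t : ℝ => t • v) ((1:ℝ) • v) t := (hasDerivAt_id t).smul_const v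
      simpa [hγ] using this.const_add p₁
    have hgradAt : HasGradientAt F (gradient F (γ t)) (γ t) := hFd.hasGradientAt
    have h1 : HasDerivAt (fun s => F (γ s)) (inner ℝ (gradient F (γ t)) v) t := by
      have := hgradAt.hasFDerivAt.comp_hasDerivAt t hγd
      simpa [Function.comp_def] using this
    have h2 : HasDerivAt (fun s : ℝ => a + s * b) b t := by
      simpa using ((hasDerivAt_id t).mul_const b).const_add a
    have h3 : HasDerivAt (fun s : ℝ => Real.log (a + s * b)) (b / (a + t * b)) t :=
      h2.log (hs0 t ht).ne'
    exact h1.sub ((h3.const_mul (8 * f)))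
  -- derivative nonneg
  have hdnn : ∀ t ∈ Set.Icc (0:ℝ) 1,
      0 ≤ inner ℝ (gradient F (γ t)) v - 8 * f * (b / (a + t * b)) := by
    intro t ht
    have hmem := hγmem t ht
    have hs := hs0 t ht
    have hinner : (inner ℝ (gradient F (γ t)) v : ℝ) = ∑ i, gradient F (γ t) i * v i := by
      rw [PiLp.inner_apply]
      exact Finset.sum_congr rfl fun i _ => by simp [mul_comm]
    have hlb : ∀ i : Fin n, 8 * f * R i / (a + t * b) * v i ≤ gradient F (γ t) i * v i := by
      intro i
      have := hgrad (γ t) hmem i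
      rw [hsum t] at this
      exact mul_le_mul_of_nonneg_right this (hv0 i)
    have hsum2 : (∑ i, 8 * f * R i / (a + t * b) * v i) = 8 * f * (b / (a + t * b)) := by
      rw [Finset.sum_congr rfl (fun i _ => by ring_nf : ∀ i ∈ Finset.univ,
        8 * f * R i / (a + t * b) * v i = 8 * f / (a + t * b) * (v i * R i))]
      rw [← Finset.mul_sum, ← hb]
      ring
    have : 8 * f * (b / (a + t * b)) ≤ ∑ i, gradient F (γ t) i * v i := by
      rw [← hsum2]
      exact Finset.sum_le_sum fun i _ => hlb i
    rw [hinner]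
    linarith
  -- φ monotone on Icc 0 1
  have hmono : MonotoneOn φ (Set.Icc (0:ℝ) 1) := by
    apply monotoneOn_of_deriv_nonneg (convex_Icc 0 1)
    · intro t ht
      exact (hderiv t ht).continuousAt.continuousWithinAt
    · intro t ht
      rw [interior_Icc] at ht
      exact (hderiv t (Set.mem_Icc_of_Ioo ht)).differentiableAt.differentiableWithinAt
    · intro t ht
      rw [interior_Icc] at ht
      rw [(hderiv t (Set.mem_Icc_of_Ioo ht)).deriv]
      exact hdnn t (Set.mem_Icc_of_Ioo ht)
  have key := hmono (Set.left_mem_Icc.mpr zero_le_one) (Set.right_mem_Icc.mpr zero_le_one)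
    zero_le_one
  have hγ0 : γ 0 = p₁ := by simp [hγ]
  have hγ1 : γ 1 = p₂ := by simp [hγ, hv]
  have hsum1 : (∑ j, p₂ j * R j) = a + b := by
    have := hsum 1
    rw [hγ1] at this
    simpa using this
  have hφ0 : φ 0 = F p₁ - 8 * f * Real.log a := by simp [hφ, hγ0]
  have hφ1 : φ 1 = F p₂ - 8 * f * Real.log (a + b) := by simp [hφ, hγ1]
  rw [hφ0, hφ1] at key
  have hab : 0 < a + b := by linarith
  rw [hsum1, Real.log_div hab.ne' ha0.ne']
  linarith
end

section
/- Let n ≥ 1, let f ∈ (0,1), let R ∈ ℝ^n with R ≥ 0 componentwise and R ≠ 0, let ℓ ∈ ℝ^n with ℓ ≥ 0 componentwise, and let F : ℝ^n → ℝ be differentiable on the open positive orthant ℝ^n_{++} with 1 + F(p) > 0 for all p ∈ ℝ^n_{++}. Define V_new(p) = (p · R)/(1 + F(p)) + f (p · ℓ). Suppose ∇F(p) · p = 0 for all p ∈ ℝ^n_{++} (as follows from homogeneity of degree zero of F), and suppose there exists c ∈ (0,1) such that ∇V_new(p) ≤ c R componentwise for all p ∈ ℝ^n_{++}. Then F(p)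 ≥ 1/c − 1 > 0 for every p ∈ ℝ^n_{++}. -/
open RealInnerProductSpace in


/-- If `∇F(p)·p = 0` on the open positive orthant and there is `c ∈ (0,1)` with
`∇V_new(p) ≤ cR` componentwise on the orthant, where
`V_new(p) = (p·R)/(1+F p) + f (p·ℓ)`, then `F(p) ≥ 1/c - 1 > 0` on the orthant. -/
theorem uniform_shrinkage_forces_positive_discount (n : ℕ) (hn : 1 ≤ n)
    (f : ℝ) (hf : f ∈ Set.Ioo (0 : ℝ) 1)
    (R : EuclideanSpace ℝ (Fin n)) (hR : ∀ i, 0 ≤ R i) (hR0 : R ≠ 0)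
    (ℓ : EuclideanSpace ℝ (Fin n)) (hℓ : ∀ i, 0 ≤ ℓ i)
    (F : EuclideanSpace ℝ (Fin n) → ℝ)
    (hFdiff : DifferentiableOn ℝ F {p : EuclideanSpace ℝ (Fin n) | ∀ i, 0 < p i})
    (hF : ∀ p : EuclideanSpace ℝ (Fin n), (∀ i, 0 < p i) → 0 < 1 + F p)
    (heuler : ∀ p : EuclideanSpace ℝ (Fin n), (∀ i, 0 < p i) →
      ∑ i, gradient F p i * p i = 0)
    (c : ℝ) (hc : c ∈ Set.Ioo (0 : ℝ) 1)
    (hshrink : ∀ p : EuclideanSpace ℝ (Fin n), (∀ i, 0 < p i) →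
      ∀ i, gradient (fun q : EuclideanSpace ℝ (Fin n) =>
        (∑ j, q j * R j) / (1 + F q) + f * (∑ j, q j * ℓ j)) p i ≤ c * R i) :
    ∀ p : EuclideanSpace ℝ (Fin n), (∀ i, 0 < p i) →
      1 / c - 1 ≤ F p ∧ 0 < 1 / c - 1 := by
  obtain ⟨hc0, hc1⟩ := hc
  have hcinv : (1:ℝ) < 1 / c := one_lt_one_div hc0 hc1
  intro p hp
  refine ⟨?_, by linarith⟩
  have hopen : IsOpen {q : EuclideanSpace ℝ (Fin n) | ∀ i, 0 < q i} := by
    have : {q : EuclideanSpace ℝ (Fin n) | ∀ i, 0 < q i}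
        = ⋂ i, (EuclideanSpace.proj i) ⁻¹' Set.Ioi (0:ℝ) := by
      ext q; simp [Set.mem_iInter]
    rw [this]
    exact isOpen_iInter_of_finite fun i =>
      (isOpen_Ioi).preimage (EuclideanSpace.proj i).continuous
  have hFd : DifferentiableAt ℝ F p :=
    hFdiff.differentiableAt (hopen.mem_nhds hp)
  set a := 1 + F p with ha
  have ha0 : 0 < a := hF p hp
  set S := ∑ j, p j * R j with hS
  set T := ∑ j, p j * ℓ j with hT
  have hS0 : 0 < S := by
    have hne : ∃ i, R i ≠ 0 := by
      by_contra h
      push_neg at h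
      exact hR0 (by ext i; simpa using h i)
    obtain ⟨i, hi⟩ := hne
    have hipos : 0 < p i * R i := mul_pos (hp i) (lt_of_le_of_ne (hR i) (Ne.symm hi))
    exact Finset.sum_pos' (fun j _ => mul_nonneg (hp j).le (hR j)) ⟨i, Finset.mem_univ i, hipos⟩
  have hT0 : 0 ≤ T := Finset.sum_nonneg fun j _ => mul_nonneg (hp j).le (hℓ j)
  set gF := gradient F p with hgF
  set G : EuclideanSpace ℝ (Fin n) := (1/a) • R - (S/a^2) • gF + f • ℓ with hG
  set V : EuclideanSpace ℝ (Fin n) → ℝ :=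
    fun q => (∑ j, q j * R j) / (1 + F q) + f * (∑ j, q j * ℓ j) with hV
  have htoDualF : (InnerProductSpace.toDual ℝ (EuclideanSpace ℝ (Fin n))) gF
      = fderiv ℝ F p := by
    simp [hgF, gradient]
  have hinnerR : ∀ v : EuclideanSpace ℝ (Fin n), ⟪R, v⟫ = ∑ j, v j * R j := by
    intro v; simp [PiLp.inner_apply, RCLike.inner_apply, mul_comm]
  have hinnerL : ∀ v : EuclideanSpace ℝ (Fin n), ⟪ℓ, v⟫ = ∑ j, v j * ℓ j := by
    intro v; simp [PiLp.inner_apply, RCLike.inner_apply, mul_comm]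
  have hgrad : HasGradientAt V G p := by
    rw [hasGradientAt_iff_hasFDerivAt]
    have h1 : HasFDerivAt (fun q : EuclideanSpace ℝ (Fin n) => ∑ j, q j * R j)
        (innerSL ℝ R) p := by
      have := (innerSL ℝ R).hasFDerivAt (x := p)
      convert this using 1
      ext q
      exact (hinnerR q).symm
    have h2 : HasFDerivAt (fun q : EuclideanSpace ℝ (Fin n) => ∑ j, q j * ℓ j)
        (innerSL ℝ ℓ) p := by
      have := (innerSL ℝ ℓ).hasFDerivAt (x := p)
      convert this using 1
      ext q
      exact (hinnerL q).symm
    have h3 : HasFDerivAt (fun q : EuclideanSpace ℝ (Fin n) => 1 + F q)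
        (fderiv ℝ F p) p := hFd.hasFDerivAt.const_add 1
    have hinv : HasFDerivAt (fun q : EuclideanSpace ℝ (Fin n) => (1 + F q)⁻¹)
        ((-(ContinuousLinearMap.mulLeftRight ℝ ℝ a⁻¹ a⁻¹)).comp (fderiv ℝ F p)) p := by
      have h := (hasFDerivAt_inv' (𝕜 := ℝ) (R := ℝ) (x := a) ha0.ne').comp p h3
      exact h
    have h4 := h1.mul hinv
    have h5 := h4.add (h2.const_mul f)
    have hVeq : V = fun q : EuclideanSpace ℝ (Fin n) =>
        (∑ j, q j * R j) * (1 + F q)⁻¹ + f * (∑ j, q j * ℓ j) := by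
      funext q; simp [hV, div_eq_mul_inv]
    rw [hVeq]
    refine HasFDerivAt.congr_fderiv h5 ?_
    refine ContinuousLinearMap.ext fun (v : EuclideanSpace ℝ (Fin n)) => ?_
    have hFv : (fderiv ℝ F p) v = ⟪gF, v⟫ := by
      rw [← htoDualF]; simp [InnerProductSpace.toDual_apply_apply]
    simp only [InnerProductSpace.toDual_apply_apply, hG, inner_add_left, inner_sub_left,
      real_inner_smul_left, ContinuousLinearMap.add_apply, ContinuousLinearMap.smul_apply,
      ContinuousLinearMap.comp_apply, ContinuousLinearMap.neg_apply,
      ContinuousLinearMap.mulLeftRight_apply, smul_eq_mul, innerSL_apply_apply, hFv, ← hS, ← ha]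
    field_simp
    ring
  have hgradV : gradient V p = G := hgrad.gradient
  have hsum : ∑ i, gradient V p i * p i = S / a + f * T := by
    rw [hgradV]
    have hGi : ∀ i, G i * p i = (1/a) * (R i * p i) - (S/a^2) * (gF i * p i)
        + f * (ℓ i * p i) := by
      intro i
      simp only [hG, PiLp.add_apply, PiLp.sub_apply, PiLp.smul_apply, smul_eq_mul]
      ring
    rw [Finset.sum_congr rfl fun i _ => hGi i]
    rw [Finset.sum_add_distrib, Finset.sum_sub_distrib, ← Finset.mul_sum, ← Finset.mul_sum,
      ← Finset.mul_sum]
    have h0 : ∑ i, gF i * p i = 0 := heuler p hp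
    rw [h0, mul_zero, sub_zero]
    have hRS : ∑ i, R i * p i = S := by
      rw [hS]; exact Finset.sum_congr rfl fun i _ => mul_comm _ _
    have hLT : ∑ i, ℓ i * p i = T := by
      rw [hT]; exact Finset.sum_congr rfl fun i _ => mul_comm _ _
    rw [hRS, hLT]
    ring
  have hle : ∑ i, gradient V p i * p i ≤ c * S := by
    have h1 : ∑ i, gradient V p i * p i ≤ ∑ i, c * R i * p i := by
      refine Finset.sum_le_sum fun i _ => ?_
      exact mul_le_mul_of_nonneg_right (hshrink p hp i) (hp i).le
    refine h1.trans_eq ?_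
    rw [hS, Finset.mul_sum]
    exact Finset.sum_congr rfl fun i _ => by ring
  rw [hsum] at hle
  have hfT : 0 ≤ f * T := mul_nonneg hf.1.le hT0
  have hkey : S / a ≤ c * S := by linarith
  have h1ca : 1 ≤ c * a := by
    rw [div_le_iff₀ ha0] at hkey
    have h : S * 1 ≤ S * (c * a) := by
      calc S * 1 = S := by ring
        _ ≤ c * S * a := hkey
        _ = S * (c * a) := by ring
    exact (mul_le_mul_iff_right₀ hS0).mp h
  have hfin : 1 / c ≤ a := by
    rw [div_le_iff₀ hc0]
    linarith
  linarith
end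

section
/- No target weight mechanism achieves a uniform delta shrinkage, in the following sense. Let n ≥ 1, let f ∈ (0,1), let R ∈ ℝ^n with R ≥ 0 componentwise and R ≠ 0, let ℓ ∈ ℝ^n with ℓ ≥ 0 componentwise, and let F : ℝ^n → ℝ be differentiable on the open positive orthant ℝ^n_{++} with 1 + F(p) > 0 for all p ∈ ℝ^n_{++}. Define V_new(p) = (p · R)/(1 + F(p)) + f (p · ℓ). Assume: (i) F is homogeneous of degree zero, i.e. F(λp) = F(p) for all λ > 0 and all p ∈ ℝ^n_{++} (equivalently, V_new respects change of numéraire), and (ii) there exists p₀ ∈ ℝ^n_{++} with F(p₀) = 0. Then there exists no constant c ∈ (0,1) such that ∇V_new(p) ≤ c R componentwise for all p ∈ ℝ^n_{++}. -/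
/-- no uniform delta shrinkage: with `V_new(p) = (p·R)/(1+F p) + f (p·ℓ)`,
if `F` is homogeneous of degree zero on the open positive orthant and `F p₀ = 0` for some
`p₀` in the orthant, then there is no `c ∈ (0,1)` with `∇V_new(p) ≤ cR` componentwise on
the whole orthant. -/
theorem no_uniform_delta_shrinkage (n : ℕ) (hn : 1 ≤ n)
    (f : ℝ) (hf : f ∈ Set.Ioo (0 : ℝ) 1)
    (R : EuclideanSpace ℝ (Fin n)) (hR : ∀ i, 0 ≤ R i) (hR0 : R ≠ 0)
    (ℓ : EuclideanSpace ℝ (Fin n)) (hℓ : ∀ i, 0 ≤ ℓ i)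
    (F : EuclideanSpace ℝ (Fin n) → ℝ)
    (hFdiff : DifferentiableOn ℝ F {p : EuclideanSpace ℝ (Fin n) | ∀ i, 0 < p i})
    (hF : ∀ p : EuclideanSpace ℝ (Fin n), (∀ i, 0 < p i) → 0 < 1 + F p)
    (hhom : ∀ lam : ℝ, 0 < lam → ∀ p : EuclideanSpace ℝ (Fin n), (∀ i, 0 < p i) →
      F (lam • p) = F p)
    (p₀ : EuclideanSpace ℝ (Fin n)) (hp₀ : ∀ i, 0 < p₀ i) (hFp₀ : F p₀ = 0) :
    ¬ ∃ c ∈ Set.Ioo (0 : ℝ) 1, ∀ p : EuclideanSpace ℝ (Fin n), (∀ i, 0 < p i) →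
      ∀ i, gradient (fun q : EuclideanSpace ℝ (Fin n) =>
        (∑ j, q j * R j) / (1 + F q) + f * (∑ j, q j * ℓ j)) p i ≤ c * R i := by
  rintro ⟨c, ⟨hc0, hc1⟩, hgrad⟩
  set V : EuclideanSpace ℝ (Fin n) → ℝ := fun q => (∑ j, q j * R j) / (1 + F q) + f * (∑ j, q j * ℓ j) with hVdef
  -- the orthant is open
  have hOopen : IsOpen {p : EuclideanSpace ℝ (Fin n) | ∀ i, 0 < p i} := by
    have h : {p : EuclideanSpace ℝ (Fin n) | ∀ i, 0 < p i} = ⋂ i, {p : EuclideanSpace ℝ (Fin n) | 0 < p i} := by ext p; simp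
    rw [h]
    exact isOpen_iInter_of_finite fun i =>
      isOpen_lt continuous_const (EuclideanSpace.proj i).continuous
  have hmem : {p : EuclideanSpace ℝ (Fin n) | ∀ i, 0 < p i} ∈ nhds p₀ := hOopen.mem_nhds hp₀
  have hFd : DifferentiableAt ℝ F p₀ := hFdiff.differentiableAt hmem
  have hproj : ∀ j, DifferentiableAt ℝ (fun q : EuclideanSpace ℝ (Fin n) => q j) p₀ :=
    fun j => (EuclideanSpace.proj j : EuclideanSpace ℝ (Fin n) →L[ℝ] ℝ).differentiableAt
  have hlin1 : DifferentiableAt ℝ (fun q : EuclideanSpace ℝ (Fin n) => ∑ j, q j * R j) p₀ :=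
    DifferentiableAt.fun_sum fun j _ => (hproj j).mul_const (R j)
  have hlin2 : DifferentiableAt ℝ (fun q : EuclideanSpace ℝ (Fin n) => ∑ j, q j * ℓ j) p₀ :=
    DifferentiableAt.fun_sum fun j _ => (hproj j).mul_const (ℓ j)
  have hden : (1 + F p₀) ≠ 0 := by rw [hFp₀]; norm_num
  have hdenD : DifferentiableAt ℝ (fun q : EuclideanSpace ℝ (Fin n) => 1 + F q) p₀ :=
    (differentiableAt_const 1).add hFd
  have hVd : DifferentiableAt ℝ V p₀ := by
    simp only [hVdef, div_eq_mul_inv]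
    exact (hlin1.mul (hdenD.inv hden)).add (hlin2.const_mul f)
  -- homogeneity of V
  have hhomV : ∀ t : ℝ, 0 < t → V (t • p₀) = t * V p₀ := by
    intro t ht
    have hsum1 : (∑ j, (t • p₀) j * R j) = t * ∑ j, p₀ j * R j := by
      rw [Finset.mul_sum]
      refine Finset.sum_congr rfl fun j _ => ?_
      simp [PiLp.smul_apply, smul_eq_mul]; ring
    have hsum2 : (∑ j, (t • p₀) j * ℓ j) = t * ∑ j, p₀ j * ℓ j := by
      rw [Finset.mul_sum]
      refine Finset.sum_congr rfl fun j _ => ?_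
      simp [PiLp.smul_apply, smul_eq_mul]; ring
    simp only [hVdef, hsum1, hsum2, hhom t ht p₀ hp₀]
    ring
  -- Euler: fderiv V p₀ p₀ = V p₀
  have h1 : HasDerivAt (fun t : ℝ => t • p₀) p₀ 1 := by
    simpa using (hasDerivAt_id (1:ℝ)).smul_const p₀
  have h2 : HasDerivAt (fun t : ℝ => V (t • p₀)) (fderiv ℝ V p₀ p₀) 1 := by
    have hfd : HasFDerivAt V (fderiv ℝ V p₀) ((fun t : ℝ => t • p₀) 1) := by
      simpa using hVd.hasFDerivAt
    exact hfd.comp_hasDerivAt 1 h1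
  have heq : (fun t : ℝ => t * V p₀) =ᶠ[nhds (1:ℝ)] (fun t : ℝ => V (t • p₀)) := by
    filter_upwards [isOpen_Ioi.mem_nhds (zero_lt_one : (0:ℝ) < 1)] with t ht
    exact (hhomV t ht).symm
  have h2' : HasDerivAt (fun t : ℝ => t * V p₀) (fderiv ℝ V p₀ p₀) 1 :=
    h2.congr_of_eventuallyEq heq
  have h3 : HasDerivAt (fun t : ℝ => t * V p₀) (V p₀) 1 := hasDerivAt_mul_const (V p₀)
  have hEuler : fderiv ℝ V p₀ p₀ = V p₀ := h2'.unique h3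
  -- gradient link
  have hgr : HasGradientAt V (gradient V p₀) p₀ := hVd.hasGradientAt
  have hfd2 : fderiv ℝ V p₀ = (InnerProductSpace.toDual ℝ (EuclideanSpace ℝ (Fin n))) (gradient V p₀) :=
    hVd.hasFDerivAt.unique hgr.hasFDerivAt
  have hinner : fderiv ℝ V p₀ p₀ = ∑ i, gradient V p₀ i * p₀ i := by
    rw [hfd2]
    rw [InnerProductSpace.toDual_apply_apply, PiLp.inner_apply]
    simp [RCLike.inner_apply, mul_comm]
  -- put together
  set S : ℝ := ∑ i, p₀ i * R i with hS
  set T : ℝ := ∑ i, p₀ i * ℓ i with hT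
  have hVp₀ : V p₀ = S + f * T := by
    simp only [hVdef, hFp₀]
    norm_num
    rw [hS, hT]
  have hSpos : 0 < S := by
    obtain ⟨i, hi⟩ : ∃ i, R i ≠ 0 := by
      by_contra h
      push_neg at h
      exact hR0 (PiLp.ext h)
    refine Finset.sum_pos' (fun j _ => mul_nonneg (hp₀ j).le (hR j)) ⟨i, Finset.mem_univ i, ?_⟩
    exact mul_pos (hp₀ i) (lt_of_le_of_ne (hR i) (Ne.symm hi))
  have hTnn : 0 ≤ T := Finset.sum_nonneg fun j _ => mul_nonneg (hp₀ j).le (hℓ j)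
  have hle : ∑ i, gradient V p₀ i * p₀ i ≤ c * S := by
    rw [hS, Finset.mul_sum]
    refine Finset.sum_le_sum fun i _ => ?_
    have := hgrad p₀ hp₀ i
    calc gradient V p₀ i * p₀ i ≤ c * R i * p₀ i :=
          mul_le_mul_of_nonneg_right this (hp₀ i).le
      _ = c * (p₀ i * R i) := by ring
  have : S + f * T ≤ c * S := by
    rw [← hVp₀, ← hEuler, hinner]; exact hle
  have hfT : 0 ≤ f * T := mul_nonneg hf.1.le hTnn
  nlinarith
end
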